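/- Let α : ℝ → ℝ be a polynomial function of degree at most 2, let v > 0 and p0 ∈ ℂ, and define the curve p : [0,1] → ℂ by p(t) = p0 + v·∫₀ᵗ exp(i·α(s)) ds. If p is not injective on [0,1], then α is affine (a polynomial of degree at most 1) and |α(1) − α(0)| ≥ 2π. -/

import Mathlib

set_option maxHeartbeats 1000000

open scoped Real
open intervalIntegral MeasureTheory

private lemma sin_sq_integral_pos {a b : ℝ} (ha : 0 ≤ a) (hab : a < b) :
    0 < ∫ x in a..b, Real.sin (x^2 - a^2) := by
  have hπ : (0:ℝ) < π := Real.pi_pos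
  set c : ℝ := Real.sqrt (a^2 + π) with hcdef
  have hc2 : c^2 = a^2 + π := Real.sq_sqrt (by positivity)
  have hcpos : 0 < c := Real.sqrt_pos.mpr (by positivity)
  have hac : a < c := by
    nlinarith [sq_nonneg (c - a)]
  have hcont : Continuous fun x : ℝ => Real.sin (x^2 - a^2) := by fun_prop
  have hposIoo : ∀ u : ℝ, u ≤ c → ∀ x ∈ Set.Ioo a u, 0 < Real.sin (x^2 - a^2) := by
    intro u hu x hx
    have hxa : a < x := hx.1
    have h1 : 0 < x^2 - a^2 := by nlinarith
    have h2 : x^2 - a^2 < π := by nlinarith [hx.2]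
    exact Real.sin_pos_of_pos_of_lt_pi h1 h2
  rcases le_or_gt b c with hbc | hbc
  · exact intervalIntegral_pos_of_pos_on (hcont.intervalIntegrable a b)
      (hposIoo b hbc) hab
  · -- split at c
    have hint1 : IntervalIntegrable (fun x => Real.sin (x^2 - a^2)) volume a c :=
      hcont.intervalIntegrable a c
    have hint2 : IntervalIntegrable (fun x => Real.sin (x^2 - a^2)) volume c b :=
      hcont.intervalIntegrable c b
    have hsplit : (∫ x in a..c, Real.sin (x^2 - a^2)) + ∫ x in c..b, Real.sin (x^2 - a^2)
        = ∫ x in a..b, Real.sin (x^2 - a^2) :=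
      integral_add_adjacent_intervals hint1 hint2
    -- first part > 1/c
    have hfrac : (∫ x in a..c, (x/c) * Real.sin (x^2 - a^2)) = 1/c := by
      have hderiv : ∀ x ∈ Set.uIcc a c,
          HasDerivAt (fun y : ℝ => -Real.cos (y^2 - a^2) / (2*c))
            ((x/c) * Real.sin (x^2 - a^2)) x := by
        intro x _
        have h1 : HasDerivAt (fun y : ℝ => y^2 - a^2) (2*x) x := by
          simpa using ((hasDerivAt_pow 2 x).sub_const (a^2))
        have h2 : HasDerivAt (fun y : ℝ => -Real.cos (y^2 - a^2))
            (Real.sin (x^2 - a^2) * (2*x)) x := by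
          refine ((Real.hasDerivAt_cos (x^2 - a^2)).comp x h1).neg.congr_deriv ?_
          ring
        have h3 := h2.div_const (2*c)
        refine h3.congr_deriv ?_
        field_simp
      have := integral_eq_sub_of_hasDerivAt hderiv
        ((by fun_prop : Continuous fun x : ℝ => (x/c) * Real.sin (x^2 - a^2)).intervalIntegrable a c)
      rw [this]
      have h0 : c^2 - a^2 = π := by linarith
      rw [h0]
      simp [Real.cos_pi]
      field_simp
      ring
    have hrest : 0 < ∫ x in a..c, (1 - x/c) * Real.sin (x^2 - a^2) := by
      apply intervalIntegral_pos_of_pos_on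
        ((by fun_prop : Continuous fun x : ℝ => (1 - x/c) * Real.sin (x^2 - a^2)).intervalIntegrable a c)
      · intro x hx
        have hs := hposIoo c le_rfl x hx
        have : x/c < 1 := (div_lt_one hcpos).mpr hx.2
        have h1 : 0 < 1 - x/c := by linarith
        positivity
      · exact hac
    have h1 : (1:ℝ)/c < ∫ x in a..c, Real.sin (x^2 - a^2) := by
      have hsum : (∫ x in a..c, Real.sin (x^2 - a^2))
          = (∫ x in a..c, (1 - x/c) * Real.sin (x^2 - a^2))
            + ∫ x in a..c, (x/c) * Real.sin (x^2 - a^2) := by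
        rw [← integral_add
          ((by fun_prop : Continuous fun x : ℝ => (1 - x/c) * Real.sin (x^2 - a^2)).intervalIntegrable a c)
          ((by fun_prop : Continuous fun x : ℝ => (x/c) * Real.sin (x^2 - a^2)).intervalIntegrable a c)]
        congr 1
        funext x
        ring
      rw [hsum, hfrac]
      linarith
    -- second part ≥ -1/c
    have h2 : -(1/c) ≤ ∫ x in c..b, Real.sin (x^2 - a^2) := by
      have hcb : c ≤ b := le_of_lt hbc
      have hGderiv : ∀ x ∈ Set.uIcc c b,
          HasDerivAt (fun y : ℝ => -Real.cos (y^2 - a^2) / (2*y))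
            (Real.sin (x^2 - a^2) + Real.cos (x^2 - a^2) / (2*x^2)) x := by
        intro x hx
        rw [Set.uIcc_of_le hcb] at hx
        have hxpos : 0 < x := lt_of_lt_of_le hcpos hx.1
        have h1 : HasDerivAt (fun y : ℝ => y^2 - a^2) (2*x) x := by
          simpa using ((hasDerivAt_pow 2 x).sub_const (a^2))
        have h2 : HasDerivAt (fun y : ℝ => -Real.cos (y^2 - a^2))
            (Real.sin (x^2 - a^2) * (2*x)) x := by
          refine ((Real.hasDerivAt_cos (x^2 - a^2)).comp x h1).neg.congr_deriv ?_
          ring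
        have hden : HasDerivAt (fun y : ℝ => 2*y) 2 x := by
          simpa using (hasDerivAt_id x).const_mul 2
        have h3 := h2.div hden (by positivity)
        refine h3.congr_deriv ?_
        field_simp
        ring
      have hcontcos : ContinuousOn (fun x : ℝ => Real.cos (x^2 - a^2) / (2*x^2)) (Set.uIcc c b) := by
        apply ContinuousOn.div
        · exact (Continuous.continuousOn (by fun_prop))
        · exact (Continuous.continuousOn (by fun_prop))
        · intro x hx
          rw [Set.uIcc_of_le hcb] at hx
          have hxpos : 0 < x := lt_of_lt_of_le hcpos hx.1
          positivity
      have hintcos : IntervalIntegrable (fun x : ℝ => Real.cos (x^2 - a^2) / (2*x^2)) volume c b :=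
        hcontcos.intervalIntegrable
      have hintsum : IntervalIntegrable
          (fun x : ℝ => Real.sin (x^2 - a^2) + Real.cos (x^2 - a^2) / (2*x^2)) volume c b :=
        hint2.add hintcos
      have hftc := integral_eq_sub_of_hasDerivAt hGderiv hintsum
      have hsplit2 : (∫ x in c..b, Real.sin (x^2 - a^2))
          = (-Real.cos (b^2 - a^2) / (2*b) - -Real.cos (c^2 - a^2) / (2*c))
            - ∫ x in c..b, Real.cos (x^2 - a^2) / (2*x^2) := by
        rw [← hftc, integral_add hint2 hintcos]
        ring
      have hcosbound : (∫ x in c..b, Real.cos (x^2 - a^2) / (2*x^2))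
          ≤ 1/(2*c) - 1/(2*b) := by
        have hub : (∫ x in c..b, (1:ℝ)/(2*x^2)) = 1/(2*c) - 1/(2*b) := by
          have hd : ∀ x ∈ Set.uIcc c b,
              HasDerivAt (fun y : ℝ => -(1/(2*y))) (1/(2*x^2)) x := by
            intro x hx
            rw [Set.uIcc_of_le hcb] at hx
            have hxpos : 0 < x := lt_of_lt_of_le hcpos hx.1
            have : HasDerivAt (fun y : ℝ => 2*y) 2 x := by
              simpa using (hasDerivAt_id x).const_mul 2
            have h4 := ((hasDerivAt_const x (1:ℝ)).div this (by positivity)).neg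
            refine h4.congr_deriv ?_
            field_simp
            ring
          have hintub : IntervalIntegrable (fun x : ℝ => (1:ℝ)/(2*x^2)) volume c b := by
            apply ContinuousOn.intervalIntegrable
            apply ContinuousOn.div
            · exact continuousOn_const
            · exact (Continuous.continuousOn (by fun_prop))
            · intro x hx
              rw [Set.uIcc_of_le hcb] at hx
              have hxpos : 0 < x := lt_of_lt_of_le hcpos hx.1
              positivity
          rw [integral_eq_sub_of_hasDerivAt hd hintub]
          ring
        rw [← hub]
        apply integral_mono_on hcb hintcos
          (by
            apply ContinuousOn.intervalIntegrable
            apply ContinuousOn.div continuousOn_const (Continuous.continuousOn (by fun_prop))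
            intro x hx
            rw [Set.uIcc_of_le hcb] at hx
            have hxpos : 0 < x := lt_of_lt_of_le hcpos hx.1
            positivity)
        intro x hx
        have hxpos : 0 < x := lt_of_lt_of_le hcpos hx.1
        have : Real.cos (x^2 - a^2) ≤ 1 := Real.cos_le_one _
        have h2x : (0:ℝ) < 2*x^2 := by positivity
        rw [div_le_div_iff_of_pos_right h2x] at *
        exact this
      have hbpos : 0 < b := lt_trans hcpos hbc
      have hGb : -(1/(2*b)) ≤ -Real.cos (b^2 - a^2) / (2*b) := by
        have h1 : Real.cos (b^2 - a^2) ≤ 1 := Real.cos_le_one _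
        have h2b : (0:ℝ) < 2*b := by positivity
        rw [neg_div, neg_le_neg_iff, div_le_div_iff_of_pos_right h2b]
        exact h1
      have hGc : -Real.cos (c^2 - a^2) / (2*c) = 1/(2*c) := by
        have hπc : c^2 - a^2 = π := by linarith
        rw [hπc, Real.cos_pi]
        norm_num
      have hcc : (1:ℝ)/c = 1/(2*c) + 1/(2*c) := by
        field_simp
        ring
      linarith [hsplit2, hcosbound, hGb]
    linarith [hsplit]

private lemma contExpI {g : ℝ → ℝ} (hg : Continuous g) :
    Continuous fun x => Complex.exp (Complex.I * (g x : ℂ)) :=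
  Complex.continuous_exp.comp (continuous_const.mul (Complex.continuous_ofReal.comp hg))

private lemma im_integral_exp {g : ℝ → ℝ} (hg : Continuous g) (a b : ℝ) :
    (∫ x in a..b, Complex.exp (Complex.I * (g x : ℂ))).im = ∫ x in a..b, Real.sin (g x) := by
  have h := Complex.imCLM.intervalIntegral_comp_comm
    ((contExpI hg).intervalIntegrable a b (μ := volume))
  have h2 : (fun x => Complex.imCLM (Complex.exp (Complex.I * (g x : ℂ))))
      = fun x => Real.sin (g x) := by
    funext x
    simp [mul_comm Complex.I ((g x : ℂ)), Complex.exp_ofReal_mul_I_im]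
  rw [h2] at h
  exact h.symm

private lemma fresnel_ne_zero_nonneg {a b : ℝ} (ha : 0 ≤ a) (hab : a < b) :
    (∫ x in a..b, Complex.exp (Complex.I * ((x^2 : ℝ) : ℂ))) ≠ 0 := by
  intro h0
  have hg : Continuous fun x : ℝ => x^2 - a^2 := by fun_prop
  have hJ : (∫ x in a..b, Complex.exp (Complex.I * ((x^2 - a^2 : ℝ) : ℂ))).im
      = ∫ x in a..b, Real.sin (x^2 - a^2) := im_integral_exp hg a b
  have hpos := sin_sq_integral_pos ha hab
  have hrel : (∫ x in a..b, Complex.exp (Complex.I * ((x^2 - a^2 : ℝ) : ℂ)))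
      = Complex.exp (Complex.I * ((-(a^2) : ℝ) : ℂ))
        * ∫ x in a..b, Complex.exp (Complex.I * ((x^2 : ℝ) : ℂ)) := by
    rw [← intervalIntegral.integral_const_mul]
    congr 1
    funext x
    rw [← Complex.exp_add]
    congr 1
    push_cast
    ring
  rw [h0, mul_zero] at hrel
  rw [hrel] at hJ
  simp at hJ
  linarith [hpos, hJ.symm.le]

private lemma fresnel_ne_zero {a b : ℝ} (hab : a < b) :
    (∫ x in a..b, Complex.exp (Complex.I * ((x^2 : ℝ) : ℂ))) ≠ 0 := by
  rcases le_or_gt 0 a with ha | ha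
  · exact fresnel_ne_zero_nonneg ha hab
  rcases le_or_gt b 0 with hb | hb
  · -- reflect
    have hrefl : (∫ x in a..b, Complex.exp (Complex.I * ((x^2 : ℝ) : ℂ)))
        = ∫ x in -b..-a, Complex.exp (Complex.I * ((x^2 : ℝ) : ℂ)) := by
      have h := integral_comp_neg (a := a) (b := b)
        (fun x => Complex.exp (Complex.I * ((x^2 : ℝ) : ℂ)))
      rw [← h]
      congr 1
      funext x
      congr 1
      push_cast
      ring
    rw [hrefl]
    exact fresnel_ne_zero_nonneg (by linarith) (by linarith)
  · -- split at 0
    intro h0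
    have hint : ∀ u v : ℝ, IntervalIntegrable
        (fun x => Complex.exp (Complex.I * ((x^2 : ℝ) : ℂ))) volume u v :=
      fun u v => (contExpI (by fun_prop)).intervalIntegrable u v
    have hsplit : (∫ x in a..(0:ℝ), Complex.exp (Complex.I * ((x^2 : ℝ) : ℂ)))
        + ∫ x in (0:ℝ)..b, Complex.exp (Complex.I * ((x^2 : ℝ) : ℂ))
        = ∫ x in a..b, Complex.exp (Complex.I * ((x^2 : ℝ) : ℂ)) :=
      integral_add_adjacent_intervals (hint a 0) (hint 0 b)
    have hrefl : (∫ x in a..(0:ℝ), Complex.exp (Complex.I * ((x^2 : ℝ) : ℂ)))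
        = ∫ x in (0:ℝ)..(-a), Complex.exp (Complex.I * ((x^2 : ℝ) : ℂ)) := by
      have h := integral_comp_neg (a := (0:ℝ)) (b := -a)
        (fun x => Complex.exp (Complex.I * ((x^2 : ℝ) : ℂ)))
      simp only [neg_neg, neg_zero] at h
      rw [← h]
      congr 1
      funext x
      congr 1
      push_cast
      ring
    have him : ∀ u : ℝ, 0 < u →
        0 < (∫ x in (0:ℝ)..u, Complex.exp (Complex.I * ((x^2 : ℝ) : ℂ))).im := by
      intro u hu
      have := im_integral_exp (g := fun x : ℝ => x^2) (by fun_prop) 0 u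
      rw [this]
      have := sin_sq_integral_pos (a := 0) (b := u) le_rfl hu
      simpa using this
    have h1 := him (-a) (by linarith)
    have h2 := him b hb
    rw [hrefl] at hsplit
    rw [h0] at hsplit
    have him0 := congrArg Complex.im hsplit
    rw [Complex.add_im, Complex.zero_im] at him0
    linarith

private lemma quad_integral_ne_zero {A B C s t : ℝ} (hA : 0 < A) (hst : s < t) :
    (∫ x in s..t, Complex.exp (Complex.I * ((A*x^2 + B*x + C : ℝ) : ℂ))) ≠ 0 := by
  set r := Real.sqrt A with hr
  have hr2 : r^2 = A := Real.sq_sqrt hA.le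
  have hrpos : 0 < r := Real.sqrt_pos.mpr hA
  set m := B/(2*r) with hm
  set D := C - B^2/(4*A) with hD
  have hkey : ∀ x : ℝ, A*x^2 + B*x + C = (r*x+m)^2 + D := by
    intro x
    rw [hm, hD, ← hr2]
    field_simp
    ring
  have hsplit : (fun x : ℝ => Complex.exp (Complex.I * ((A*x^2 + B*x + C : ℝ) : ℂ)))
      = fun x => Complex.exp (Complex.I * ((D : ℝ) : ℂ))
          * Complex.exp (Complex.I * ((((r*x+m) : ℝ)^2 : ℝ) : ℂ)) := by
    funext x
    rw [← Complex.exp_add, hkey x]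
    congr 1
    push_cast
    ring
  rw [hsplit, intervalIntegral.integral_const_mul]
  apply mul_ne_zero (Complex.exp_ne_zero _)
  have hcomp := integral_comp_mul_add (a := s) (b := t)
    (f := fun y : ℝ => Complex.exp (Complex.I * ((y^2 : ℝ) : ℂ))) (ne_of_gt hrpos) m
  rw [hcomp]
  apply smul_ne_zero (inv_ne_zero (ne_of_gt hrpos))
  apply fresnel_ne_zero
  nlinarith

private lemma interval_integral_conj (f : ℝ → ℂ) (a b : ℝ) :
    (∫ x in a..b, (starRingEnd ℂ) (f x)) = (starRingEnd ℂ) (∫ x in a..b, f x) := by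
  rw [intervalIntegral, intervalIntegral, integral_conj, integral_conj, ← map_sub]

theorem clothoid_embedded_unless_full_circle
    (P : Polynomial ℝ) (hP : P.natDegree ≤ 2)
    (v : ℝ) (hv : 0 < v) (p0 : ℂ) (p : ℝ → ℂ)
    (hp : ∀ t, p t = p0 + v * ∫ s in (0:ℝ)..t, Complex.exp (Complex.I * (P.eval s)))
    (hnotinj : ¬ Set.InjOn p (Set.Icc (0:ℝ) 1)) :
    P.natDegree ≤ 1 ∧ 2 * π ≤ |P.eval 1 - P.eval 0| := by
  rw [Set.InjOn] at hnotinj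
  push_neg at hnotinj
  obtain ⟨s₀, hs₀, t₀, ht₀, hpe₀, hne₀⟩ := hnotinj
  obtain ⟨s, t, hs, ht, hst, hpe⟩ : ∃ s t : ℝ, s ∈ Set.Icc (0:ℝ) 1 ∧
      t ∈ Set.Icc (0:ℝ) 1 ∧ s < t ∧ p s = p t := by
    rcases lt_or_gt_of_ne hne₀ with h | h
    · exact ⟨s₀, t₀, hs₀, ht₀, h, hpe₀⟩
    · exact ⟨t₀, s₀, ht₀, hs₀, h, hpe₀.symm⟩
  have hcont : Continuous fun x : ℝ => Complex.exp (Complex.I * ((P.eval x : ℝ) : ℂ)) :=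
    Complex.continuous_exp.comp (continuous_const.mul (Complex.continuous_ofReal.comp P.continuous))
  have hint : ∀ u w : ℝ, IntervalIntegrable
      (fun x => Complex.exp (Complex.I * ((P.eval x : ℝ) : ℂ))) volume u w :=
    fun u w => hcont.intervalIntegrable u w
  have h0 : (∫ x in s..t, Complex.exp (Complex.I * ((P.eval x : ℝ) : ℂ))) = 0 := by
    have hsub := integral_interval_sub_left (hint 0 t) (hint 0 s)
    have hvc : ((v:ℂ)) ≠ 0 := by exact_mod_cast hv.ne'
    have heq : (v:ℂ) * ∫ x in s..t, Complex.exp (Complex.I * ((P.eval x : ℝ) : ℂ)) = 0 := by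
      rw [← hsub, mul_sub]
      have h1 := hp s
      have h2 := hp t
      have : p t - p s = 0 := by rw [hpe, sub_self]
      rw [h1, h2] at this
      ring_nf at this ⊢
      linear_combination this
    exact (mul_eq_zero.mp heq).resolve_left hvc
  set A := P.coeff 2 with hAdef
  set B := P.coeff 1 with hBdef
  set C := P.coeff 0 with hCdef
  have heval : ∀ x : ℝ, P.eval x = A*x^2 + B*x + C := by
    intro x
    have h3 : P.natDegree < 3 := by omega
    rw [Polynomial.eval_eq_sum_range' h3]
    simp [Finset.sum_range_succ]
    ring
  have h0' : (∫ x in s..t, Complex.exp (Complex.I * ((A*x^2+B*x+C : ℝ) : ℂ))) = 0 := by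
    rw [← h0]
    congr 1
    funext x
    rw [heval x]
  have hA : A = 0 := by
    by_contra hA0
    rcases lt_or_gt_of_ne hA0 with hneg | hpos
    · have hconj := congrArg (starRingEnd ℂ) h0'
      rw [← interval_integral_conj] at hconj
      have hrw : (fun x : ℝ => (starRingEnd ℂ)
            (Complex.exp (Complex.I * ((A*x^2+B*x+C : ℝ) : ℂ))))
          = fun x : ℝ => Complex.exp (Complex.I * (((-A)*x^2+(-B)*x+(-C) : ℝ) : ℂ)) := by
        funext x
        rw [← Complex.exp_conj]
        congr 1
        rw [map_mul, Complex.conj_I, Complex.conj_ofReal]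
        push_cast
        ring
      rw [hrw] at hconj
      simp only [map_zero] at hconj
      exact quad_integral_ne_zero (by linarith : (0:ℝ) < -A) hst hconj
    · exact quad_integral_ne_zero hpos hst h0'
  have hdeg : P.natDegree ≤ 1 := by
    rw [Polynomial.natDegree_le_iff_coeff_eq_zero]
    intro N hN
    rcases eq_or_lt_of_le (show 2 ≤ N by omega) with h2 | h2
    · rw [← h2]; exact hA
    · exact Polynomial.coeff_eq_zero_of_natDegree_lt (by omega)
  refine ⟨hdeg, ?_⟩
  -- affine case
  rw [hA] at h0' heval
  have hB : B ≠ 0 := by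
    intro hB0
    rw [hB0] at h0'
    simp only [zero_mul, add_zero, zero_add] at h0'
    rw [intervalIntegral.integral_const] at h0'
    rcases smul_eq_zero.mp h0' with h | h
    · linarith
    · exact Complex.exp_ne_zero _ h
  -- FTC for the affine integrand
  have hderiv : ∀ x ∈ Set.uIcc s t,
      HasDerivAt (fun y : ℝ => Complex.exp (Complex.I * ((B*y+C : ℝ) : ℂ)) / (Complex.I * B))
        (Complex.exp (Complex.I * ((0*x^2 + B*x+C : ℝ) : ℂ))) x := by
    intro x _
    have h1 : HasDerivAt (fun y : ℝ => Complex.I * ((B*y+C : ℝ) : ℂ)) (Complex.I * B) x := by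
      have : HasDerivAt (fun y : ℝ => ((B*y+C : ℝ) : ℂ)) (B : ℂ) x := by
        have hre : HasDerivAt (fun y : ℝ => B*y+C) B x := by
          simpa using ((hasDerivAt_id x).const_mul B).add_const C
        exact hre.ofReal_comp
      simpa using this.const_mul Complex.I
    have h2 := (Complex.hasDerivAt_exp _).comp x h1
    have hIB : Complex.I * (B:ℂ) ≠ 0 :=
      mul_ne_zero Complex.I_ne_zero (by exact_mod_cast hB)
    have h3 := h2.div_const (Complex.I * B)
    refine h3.congr_deriv ?_
    rw [mul_div_assoc, div_self hIB, mul_one]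
    norm_num
  have hintf : IntervalIntegrable
      (fun x : ℝ => Complex.exp (Complex.I * ((0*x^2 + B*x+C : ℝ) : ℂ))) volume s t := by
    apply Continuous.intervalIntegrable
    fun_prop
  have hftc := integral_eq_sub_of_hasDerivAt hderiv hintf
  rw [h0'] at hftc
  have hIB : Complex.I * (B:ℂ) ≠ 0 := mul_ne_zero Complex.I_ne_zero (by exact_mod_cast hB)
  have h5 : Complex.exp (Complex.I * ((B*t+C : ℝ) : ℂ))
      = Complex.exp (Complex.I * ((B*s+C : ℝ) : ℂ)) := by
    have h6 := sub_eq_zero.mp hftc.symm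
    field_simp at h6
    rw [div_left_inj' (by exact_mod_cast hB)] at h6
    push_cast
    exact_mod_cast h6
  rw [Complex.exp_eq_exp_iff_exists_int] at h5
  obtain ⟨n, hn⟩ := h5
  have hre : B*t + C = (B*s + C) + n*(2*π) := by
    have him := congrArg Complex.im hn
    simp [Complex.add_im, Complex.mul_im, Complex.ofReal_im, Complex.ofReal_re] at him
    push_cast at him ⊢
    linarith
  have hBts : B*(t-s) = 2*π*n := by linarith
  have hn0 : n ≠ 0 := by
    intro h
    rw [h] at hBts
    simp at hBts
    rcases hBts with h | h
    · exact hB h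
    · linarith
  have hπ : (0:ℝ) < π := Real.pi_pos
  have habs : |B| * (t-s) = 2*π*|(n:ℝ)| := by
    have := congrArg abs hBts
    rw [abs_mul, abs_of_pos (by linarith : (0:ℝ) < t - s)] at this
    rw [this, abs_mul]
    rw [abs_of_pos (by linarith : (0:ℝ) < 2*π)]
  have hnabs : (1:ℝ) ≤ |(n:ℝ)| := by
    rw [← Int.cast_abs]
    exact_mod_cast Int.one_le_abs hn0
  have hts1 : t - s ≤ 1 := by
    obtain ⟨hs0, _⟩ := hs
    obtain ⟨_, ht1⟩ := ht
    linarith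
  have hBbig : 2*π ≤ |B| := by
    have h7 : 2*π ≤ |B| * (t-s) := by
      rw [habs]
      nlinarith
    nlinarith [abs_nonneg B]
  rw [heval 1, heval 0]
  have : 0*(1:ℝ)^2 + B*1 + C - (0*(0:ℝ)^2 + B*0 + C) = B := by ring
  rw [this]
  exact hBbig
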